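/- Let G be a bipartite multigraph on vertex classes A and B whose degree sequence on A is almost regular (every degree in A equals k or k−1 for some fixed k) and whose degree sequence on B is arbitrary. Then G can be transformed by a finite series of multigraph switch operations (which preserve all vertex degrees) into a bipartite multigraph Ḡ with the same degree sequences that is B-balanced, i.e., for every b ∈ B there is an l such that every a ∈ A is joined to b by either l or l−1 parallel edges. -/

import Mathlib

open Finset

variable {A B : Type*} [Fintype A] [Fintype B] [DecidableEq A] [DecidableEq B]

/-- A multigraph switch operation on a bipartite multigraph given by its edge
multiplicities: the multiplicities `m a₁ b₁` and `m a₂ b₂` are each decreased by `1`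
(requiring them to be at least `1`), the multiplicities `m a₁ b₂` and `m a₂ b₁` are
each increased by `1`, and all other multiplicities are unchanged. -/
def MultiSwitch (m m' : A → B → ℕ) : Prop :=
  ∃ a₁ a₂ b₁ b₂, a₁ ≠ a₂ ∧ b₁ ≠ b₂ ∧ 1 ≤ m a₁ b₁ ∧ 1 ≤ m a₂ b₂ ∧
    m' a₁ b₁ + 1 = m a₁ b₁ ∧ m' a₂ b₂ + 1 = m a₂ b₂ ∧
    m' a₁ b₂ = m a₁ b₂ + 1 ∧ m' a₂ b₁ = m a₂ b₁ + 1 ∧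
    (∀ a b, (a, b) ≠ (a₁, b₁) → (a, b) ≠ (a₂, b₂) → (a, b) ≠ (a₁, b₂) →
      (a, b) ≠ (a₂, b₁) → m' a b = m a b)

section Aux

/-- If `g` is obtained from `f` by decreasing the value at `b₁` by one and increasing
the value at `b₂` by one, the total sums agree. -/
lemma mgb_sum_shift (f g : B → ℕ) (b₁ b₂ : B) (hne : b₁ ≠ b₂)
    (h1 : g b₁ + 1 = f b₁) (h2 : g b₂ = f b₂ + 1)
    (h3 : ∀ b, b ≠ b₁ → b ≠ b₂ → g b = f b) :
    ∑ b : B, g b = ∑ b : B, f b := by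
  have key : ∀ b : B, g b + (if b = b₁ then 1 else 0) = f b + (if b = b₂ then 1 else 0) := by
    intro b
    by_cases e1 : b = b₁
    · subst e1; simp [hne, h1.symm]
    · by_cases e2 : b = b₂
      · subst e2; simp [e1, h2]
      · simp [e1, e2, h3 b e1 e2]
  have hsum : ∑ b : B, (g b + (if b = b₁ then 1 else 0))
      = ∑ b : B, (f b + (if b = b₂ then 1 else 0)) :=
    Finset.sum_congr rfl (fun b _ => key b)
  rw [Finset.sum_add_distrib, Finset.sum_add_distrib] at hsum
  simp [Finset.sum_ite_eq'] at hsum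
  omega

lemma mgb_ind_sum (a₀ : A) (b₀ : B) (c : ℕ) :
    ∑ a : A, ∑ b : B, (if a = a₀ ∧ b = b₀ then c else 0) = c := by
  simp [ite_and, Finset.sum_ite_eq']

lemma mgb_sq1 (x : ℕ) (h : 1 ≤ x) : (x - 1)^2 + (2*x - 1) = x^2 := by
  cases x with
  | zero => omega
  | succ n =>
    have h1 : n + 1 - 1 = n := rfl
    have h2 : 2 * (n + 1) - 1 = 2 * n + 1 := by omega
    rw [h1, h2]; ring

lemma mgb_switch_rowSum {m m' : A → B → ℕ} (h : MultiSwitch m m') (a : A) :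
    ∑ b : B, m' a b = ∑ b : B, m a b := by
  obtain ⟨a₁, a₂, b₁, b₂, hA, hB, _, _, e11, e22, e12, e21, hrest⟩ := h
  by_cases ha1 : a = a₁
  · subst ha1
    refine mgb_sum_shift (m a) (m' a) b₁ b₂ hB e11 e12 ?_
    intro b hb1 hb2
    exact hrest a b (by simp [hb1]) (by simp [hA]) (by simp [hb2]) (by simp [hA])
  · by_cases ha2 : a = a₂
    · subst ha2
      refine mgb_sum_shift (m a) (m' a) b₂ b₁ hB.symm e22 e21 ?_
      intro b hb2 hb1
      exact hrest a b (by simp [ha1]) (by simp [hb2]) (by simp [ha1]) (by simp [hb1])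
    · exact Finset.sum_congr rfl fun b _ =>
        hrest a b (by simp [ha1]) (by simp [ha2]) (by simp [ha1]) (by simp [ha2])

lemma mgb_switch_colSum {m m' : A → B → ℕ} (h : MultiSwitch m m') (b : B) :
    ∑ a : A, m' a b = ∑ a : A, m a b := by
  obtain ⟨a₁, a₂, b₁, b₂, hA, hB, _, _, e11, e22, e12, e21, hrest⟩ := h
  by_cases hb1 : b = b₁
  · subst hb1
    refine mgb_sum_shift (fun a => m a b) (fun a => m' a b) a₁ a₂ hA e11 e21 ?_
    intro a ha1 ha2
    exact hrest a b (by simp [ha1]) (by simp [ha2]) (by simp [ha1]) (by simp [ha2])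
  · by_cases hb2 : b = b₂
    · subst hb2
      refine mgb_sum_shift (fun a => m a b) (fun a => m' a b) a₂ a₁ hA.symm e22 e12 ?_
      intro a ha2 ha1
      exact hrest a b (by simp [ha1]) (by simp [ha2]) (by simp [ha1]) (by simp [ha2])
    · exact Finset.sum_congr rfl fun a _ =>
        hrest a b (by simp [hb1]) (by simp [hb2]) (by simp [hb2]) (by simp [hb1])

/-- The result of a switch at `(a₁, b₁), (a₂, b₂)` as an explicit function. -/
def mgbSwitchFun (m : A → B → ℕ) (a₁ a₂ : A) (b₁ b₂ : B) : A → B → ℕ := fun a b =>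
  if a = a₁ ∧ b = b₁ then m a₁ b₁ - 1
  else if a = a₂ ∧ b = b₂ then m a₂ b₂ - 1
  else if a = a₁ ∧ b = b₂ then m a₁ b₂ + 1
  else if a = a₂ ∧ b = b₁ then m a₂ b₁ + 1
  else m a b

lemma mgb_sf11 (m : A → B → ℕ) (a₁ a₂ : A) (b₁ b₂ : B) :
    mgbSwitchFun m a₁ a₂ b₁ b₂ a₁ b₁ = m a₁ b₁ - 1 := by
  simp [mgbSwitchFun]
lemma mgb_sf22 (m : A → B → ℕ) {a₁ a₂ : A} (b₁ b₂ : B) (hA : a₁ ≠ a₂) :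
    mgbSwitchFun m a₁ a₂ b₁ b₂ a₂ b₂ = m a₂ b₂ - 1 := by
  simp [mgbSwitchFun, hA.symm]
lemma mgb_sf12 (m : A → B → ℕ) (a₁ a₂ : A) {b₁ b₂ : B} (hA : a₁ ≠ a₂) (hB : b₁ ≠ b₂) :
    mgbSwitchFun m a₁ a₂ b₁ b₂ a₁ b₂ = m a₁ b₂ + 1 := by
  simp [mgbSwitchFun, hA, hB.symm]
lemma mgb_sf21 (m : A → B → ℕ) {a₁ a₂ : A} {b₁ b₂ : B} (hA : a₁ ≠ a₂) (hB : b₁ ≠ b₂) :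
    mgbSwitchFun m a₁ a₂ b₁ b₂ a₂ b₁ = m a₂ b₁ + 1 := by
  simp [mgbSwitchFun, hA.symm, hB]
lemma mgb_sfrest (m : A → B → ℕ) (a₁ a₂ : A) (b₁ b₂ : B) (a : A) (b : B)
    (n1 : ¬(a = a₁ ∧ b = b₁)) (n2 : ¬(a = a₂ ∧ b = b₂))
    (n3 : ¬(a = a₁ ∧ b = b₂)) (n4 : ¬(a = a₂ ∧ b = b₁)) :
    mgbSwitchFun m a₁ a₂ b₁ b₂ a b = m a b := by
  rw [mgbSwitchFun, if_neg n1, if_neg n2, if_neg n3, if_neg n4]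

lemma mgb_key_induction (k : ℕ) : ∀ n (m : A → B → ℕ),
    (∑ a : A, ∑ b : B, (m a b)^2) < n →
    (∀ a : A, (∑ b : B, m a b) = k ∨ (∑ b : B, m a b) + 1 = k) →
    ∃ m' : A → B → ℕ, Relation.ReflTransGen MultiSwitch m m' ∧
      (∀ b : B, ∃ l : ℕ, ∀ a : A, m' a b = l ∨ m' a b + 1 = l) := by
  intro n
  induction n with
  | zero => intro m h _; omega
  | succ n ih =>
    intro m hΦ hreg
    by_cases hbal : ∀ b : B, ∃ l : ℕ, ∀ a : A, m a b = l ∨ m a b + 1 = l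
    · exact ⟨m, Relation.ReflTransGen.refl, hbal⟩
    push_neg at hbal
    obtain ⟨b₁, hb₁⟩ := hbal
    have hAne : Nonempty A := by
      obtain ⟨a, -⟩ := hb₁ 0; exact ⟨a⟩
    obtain ⟨a₁, -, hmax⟩ := Finset.exists_max_image (univ : Finset A) (fun a => m a b₁)
      ⟨Classical.arbitrary A, mem_univ _⟩
    obtain ⟨a₂, h2a, h2b⟩ := hb₁ (m a₁ b₁)
    have hy : m a₂ b₁ + 2 ≤ m a₁ b₁ := by
      have := hmax a₂ (mem_univ _); omega
    have hA12 : a₁ ≠ a₂ := by intro e; rw [e] at hy; omega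
    have hb2ex : ∃ b₂, b₂ ≠ b₁ ∧ m a₁ b₂ < m a₂ b₂ := by
      by_contra hcon
      push_neg at hcon
      have hsum : ∑ b ∈ univ.erase b₁, m a₂ b ≤ ∑ b ∈ univ.erase b₁, m a₁ b :=
        Finset.sum_le_sum fun b hb => hcon b (Finset.ne_of_mem_erase hb)
      have e1 : ∑ b ∈ univ.erase b₁, m a₁ b + m a₁ b₁ = ∑ b : B, m a₁ b :=
        Finset.sum_erase_add _ _ (mem_univ _)
      have e2 : ∑ b ∈ univ.erase b₁, m a₂ b + m a₂ b₁ = ∑ b : B, m a₂ b :=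
        Finset.sum_erase_add _ _ (mem_univ _)
      have hr1 := hreg a₁
      have hr2 := hreg a₂
      omega
    obtain ⟨b₂, hB12, hvu⟩ := hb2ex
    have hB21 : b₁ ≠ b₂ := hB12.symm
    have hA21 : a₂ ≠ a₁ := hA12.symm
    set m₁ : A → B → ℕ := mgbSwitchFun m a₁ a₂ b₁ b₂ with hm₁
    have q11 : m₁ a₁ b₁ = m a₁ b₁ - 1 := mgb_sf11 m a₁ a₂ b₁ b₂
    have q22 : m₁ a₂ b₂ = m a₂ b₂ - 1 := mgb_sf22 m b₁ b₂ hA12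
    have q12 : m₁ a₁ b₂ = m a₁ b₂ + 1 := mgb_sf12 m a₁ a₂ hA12 hB21
    have q21 : m₁ a₂ b₁ = m a₂ b₁ + 1 := mgb_sf21 m hA12 hB21
    have hsw : MultiSwitch m m₁ := by
      refine ⟨a₁, a₂, b₁, b₂, hA12, hB21, by omega, by omega, by omega, by omega,
        q12, q21, ?_⟩
      intro a b n1 n2 n3 n4
      simp only [Prod.mk.injEq, ne_eq] at n1 n2 n3 n4
      exact mgb_sfrest m a₁ a₂ b₁ b₂ a b n1 n2 n3 n4
    have key_id : ∀ a b, (m₁ a b)^2 +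
        ((if a = a₁ ∧ b = b₁ then 2 * m a₁ b₁ - 1 else 0) +
         (if a = a₂ ∧ b = b₂ then 2 * m a₂ b₂ - 1 else 0)) = (m a b)^2 +
        ((if a = a₂ ∧ b = b₁ then 2 * m a₂ b₁ + 1 else 0) +
         (if a = a₁ ∧ b = b₂ then 2 * m a₁ b₂ + 1 else 0)) := by
      intro a b
      by_cases ha1 : a = a₁
      · by_cases hb1 : b = b₁
        · simp only [ha1, hb1, q11, hA12, hB12, hA21, hB21, and_true, true_and,
            and_false, false_and, if_true, if_false, add_zero, zero_add]
          exact mgb_sq1 _ (by omega)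
        · by_cases hb2 : b = b₂
          · simp only [ha1, hb2, q12, hA12, hB12, hA21, hB21, hb1, and_true, true_and,
              and_false, false_and, if_true, if_false, add_zero, zero_add]
            ring
          · rw [hm₁, mgb_sfrest m a₁ a₂ b₁ b₂ a b (by tauto) (by tauto) (by tauto) (by tauto)]
            simp only [ha1, hb1, hb2, hA12, hB12, hA21, hB21, and_true, true_and,
              and_false, false_and, if_true, if_false, add_zero, zero_add]
      · by_cases ha2 : a = a₂
        · by_cases hb1 : b = b₁
          · simp only [ha2, hb1, q21, hA12, hB12, hA21, hB21, ha1, and_true, true_and,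
              and_false, false_and, if_true, if_false, add_zero, zero_add]
            ring
          · by_cases hb2 : b = b₂
            · simp only [ha2, hb2, q22, hA12, hB12, hA21, hB21, ha1, hb1, and_true, true_and,
                and_false, false_and, if_true, if_false, add_zero, zero_add]
              exact mgb_sq1 _ (by omega)
            · rw [hm₁, mgb_sfrest m a₁ a₂ b₁ b₂ a b (by tauto) (by tauto) (by tauto) (by tauto)]
              simp only [ha1, ha2, hb1, hb2, and_true, true_and,
                and_false, false_and, if_true, if_false, add_zero, zero_add]
        · rw [hm₁, mgb_sfrest m a₁ a₂ b₁ b₂ a b (by tauto) (by tauto) (by tauto) (by tauto)]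
          simp only [ha1, ha2, and_true, true_and,
            and_false, false_and, if_true, if_false, add_zero, zero_add]
    have H : ∑ a : A, ∑ b : B, ((m₁ a b)^2 +
        ((if a = a₁ ∧ b = b₁ then 2 * m a₁ b₁ - 1 else 0) +
         (if a = a₂ ∧ b = b₂ then 2 * m a₂ b₂ - 1 else 0))) = ∑ a : A, ∑ b : B, ((m a b)^2 +
        ((if a = a₂ ∧ b = b₁ then 2 * m a₂ b₁ + 1 else 0) +
         (if a = a₁ ∧ b = b₂ then 2 * m a₁ b₂ + 1 else 0))) :=
      Finset.sum_congr rfl fun a _ => Finset.sum_congr rfl fun b _ => key_id a b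
    simp only [Finset.sum_add_distrib] at H
    rw [mgb_ind_sum, mgb_ind_sum, mgb_ind_sum, mgb_ind_sum] at H
    have hreg₁ : ∀ a : A, (∑ b : B, m₁ a b) = k ∨ (∑ b : B, m₁ a b) + 1 = k := by
      intro a; rw [mgb_switch_rowSum hsw a]; exact hreg a
    obtain ⟨m', hrt, hbal'⟩ := ih m₁ (by omega) hreg₁
    exact ⟨m', Relation.ReflTransGen.head hsw hrt, hbal'⟩

lemma mgb_rtg_rowSum {m m' : A → B → ℕ} (h : Relation.ReflTransGen MultiSwitch m m')
    (a : A) : ∑ b : B, m' a b = ∑ b : B, m a b := by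
  induction h with
  | refl => rfl
  | tail _ hstep ih => rw [mgb_switch_rowSum hstep a, ih]

lemma mgb_rtg_colSum {m m' : A → B → ℕ} (h : Relation.ReflTransGen MultiSwitch m m')
    (b : B) : ∑ a : A, m' a b = ∑ a : A, m a b := by
  induction h with
  | refl => rfl
  | tail _ hstep ih => rw [mgb_switch_colSum hstep b, ih]

end Aux

/-- a bipartite multigraph whose degree sequence on `A` is almost
regular (every degree on `A` is `k` or `k−1`) can be transformed by a finite series of
multigraph switch operations (which preserve all vertex degrees) into a bipartite
multigraph with the same degree sequences that is `B`-balanced: for every `b ∈ B`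
there is an `l` such that every `a ∈ A` is joined to `b` by `l` or `l−1` parallel
edges. -/
theorem multigraph_balancing (k : ℕ) (m : A → B → ℕ)
    (hreg : ∀ a : A, (∑ b : B, m a b) = k ∨ (∑ b : B, m a b) + 1 = k) :
    ∃ m' : A → B → ℕ,
      Relation.ReflTransGen MultiSwitch m m' ∧
      (∀ a : A, ∑ b : B, m' a b = ∑ b : B, m a b) ∧
      (∀ b : B, ∑ a : A, m' a b = ∑ a : A, m a b) ∧
      (∀ b : B, ∃ l : ℕ, ∀ a : A, m' a b = l ∨ m' a b + 1 = l) := by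
  obtain ⟨m', hrt, hbal⟩ :=
    mgb_key_induction k ((∑ a : A, ∑ b : B, (m a b)^2) + 1) m (Nat.lt_succ_self _) hreg
  exact ⟨m', hrt, mgb_rtg_rowSum hrt, mgb_rtg_colSum hrt, hbal⟩
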